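/- Let M be a d-CFF t×n binary matrix, and let D ⊆ {1,...,n} be a set of 'defective' column indices with |D| ≤ d. Define a row i to 'pass' if M_{i,j} = 0 for all j ∈ D, and for each passing row i let V_i = {j : M_{i,j} = 1}. Then the union V of all V_i over passing rows equals exactly {1,...,n} \ D. -/

import Mathlib

/-- A set of `l` columns `cols` of the binary matrix `M` contains a permutation
submatrix of dimension `l`: there are `l` distinct rows such that the restriction
of `M` to these rows and columns is a permutation matrix. -/
def IsPermSubmatrix {ι κ : Type*} (M : ι → κ → Bool) (l : ℕ) (cols : Fin l → κ) : Prop :=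
  ∃ rows : Fin l → ι, Function.Injective rows ∧
    ∃ π : Equiv.Perm (Fin l), ∀ a b : Fin l, M (rows a) (cols b) = true ↔ π a = b

/-- `M` is a `d`-cover-free family: any set of `d+1` (distinct) columns contains a
permutation submatrix of dimension `d+1`. -/
def IsCFF {ι κ : Type*} (d : ℕ) (M : ι → κ → Bool) : Prop :=
  ∀ cols : Fin (d + 1) → κ, Function.Injective cols → IsPermSubmatrix M (d + 1) cols

theorem stmt_3 (d t n : ℕ) (hn : d + 1 ≤ n) (M : Fin t → Fin n → Bool)
    (h : IsCFF d M) (D : Finset (Fin n)) (hD : D.card ≤ d) :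
    ∀ j : Fin n, (∃ i : Fin t, (∀ j' ∈ D, M i j' = false) ∧ M i j = true) ↔ j ∉ D := by
  intro j
  constructor
  · rintro ⟨i, hzero, hone⟩ hjD
    have := hzero j hjD
    simp [this] at hone
  · intro hjD
    -- extend D to a set u of size d avoiding j
    have hcardU : (Finset.univ.erase j : Finset (Fin n)).card = n - 1 := by
      simp [Finset.card_erase_of_mem]
    obtain ⟨u, hDu, huE, hucard⟩ :=
      Finset.exists_subsuperset_card_eq (n := d - D.card + D.card)
        (by
          intro x hx
          exact Finset.mem_erase.2 ⟨fun hxj => hjD (hxj ▸ hx), Finset.mem_univ x⟩ :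
            D ⊆ Finset.univ.erase j)
        (by omega)
        (by
          rw [hcardU]
          omega)
    have hucard' : u.card = d := by omega
    have hju : j ∉ u := fun hju => (Finset.mem_erase.1 (huE hju)).1 rfl
    set S : Finset (Fin n) := insert j u with hS
    have hScard : S.card = d + 1 := by
      rw [hS, Finset.card_insert_of_notMem hju, hucard']
    let e := S.orderIsoOfFin hScard
    let cols : Fin (d + 1) → Fin n := fun b => (e b : Fin n)
    have hcolsinj : Function.Injective cols := fun a b hab => by
      apply e.injective
      exact Subtype.ext hab
    obtain ⟨rows, hrinj, π, hπ⟩ := h cols hcolsinj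
    have hjS : j ∈ S := Finset.mem_insert_self j u
    set b0 : Fin (d + 1) := e.symm ⟨j, hjS⟩ with hb0
    refine ⟨rows (π.symm b0), ?_, ?_⟩
    · intro j' hj'
      have hj'S : j' ∈ S := Finset.mem_insert_of_mem (hDu hj')
      set b' : Fin (d + 1) := e.symm ⟨j', hj'S⟩ with hb'
      have hcb' : cols b' = j' := by simp [cols, hb']
      have hne : b' ≠ b0 := by
        intro hbb
        apply hju
        have : (⟨j', hj'S⟩ : S) = ⟨j, hjS⟩ := e.symm.injective (by rw [← hb', ← hb0, hbb])
        have : j' = j := congrArg Subtype.val this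
        exact this ▸ hDu hj'
      have := hπ (π.symm b0) b'
      rw [hcb'] at this
      have hne2 : π (π.symm b0) ≠ b' := by simpa using hne.symm
      rcases Bool.eq_false_or_eq_true (M (rows (π.symm b0)) j') with ht | hf
      · exact absurd (this.1 ht) hne2
      · exact hf
    · have := hπ (π.symm b0) b0
      have hcb0 : cols b0 = j := by simp [cols, hb0]
      rw [hcb0] at this
      exact this.2 (by simp)
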